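/- On the unit disk with 𝒢(z,w) = ((2u+1)/(2π)) log((u+1)/u) - 1/π and u(z,w) = |z-w|²/((1-|z|²)(1-|w|²)), one has the explicit evaluation ∂_z∂_w 𝒢(0,w) = -(1/2π)·(w̄²/(1-|w|²))·((1-3|w|²)/|w|⁴ - (2/(1-|w|²)) log|w|²) for w ≠ 0. -/

import Mathlib

open Complex

/-- The Wirtinger derivative `∂_z f = (∂_x f - i ∂_y f)/2`. -/
noncomputable def wD (f : ℂ → ℂ) (z : ℂ) : ℂ :=
  (fderiv ℝ f z 1 - Complex.I * fderiv ℝ f z Complex.I) / 2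

/-- The point-pair invariant on the unit disk: `u(z,w) = |z-w|²/((1-|z|²)(1-|w|²))`. -/
noncomputable def uDisk (z w : ℂ) : ℝ :=
  ‖z - w‖ ^ 2 / ((1 - ‖z‖ ^ 2) * (1 - ‖w‖ ^ 2))

/-- The propagator `𝒢(z,w) = ((2u+1)/(2π)) log((u+1)/u) - 1/π` on the unit disk. -/
noncomputable def GDisk (z w : ℂ) : ℝ :=
  ((2 * uDisk z w + 1) / (2 * Real.pi)) * Real.log ((uDisk z w + 1) / uDisk z w) - 1 / Real.pi

lemma wD_eq {f : ℂ → ℂ} {L : ℂ →L[ℝ] ℂ} {z : ℂ} (h : HasFDerivAt f L z) :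
    wD f z = (L 1 - Complex.I * L Complex.I)/2 := by
  rw [wD, h.fderiv]

lemma conj_eq (x : ℂ) : (starRingEnd ℂ) x = (x.re : ℂ) - (x.im : ℂ) * Complex.I := by
  apply Complex.ext <;> simp


lemma hasFDerivAt_normSq' (z : ℂ) :
    HasFDerivAt Complex.normSq ((2*z.re) • Complex.reCLM + (2*z.im) • Complex.imCLM : ℂ →L[ℝ] ℝ) z := by
  have h : (Complex.normSq : ℂ → ℝ) = fun x => Complex.reCLM x * Complex.reCLM x + Complex.imCLM x * Complex.imCLM x := by
    funext x; simp [Complex.normSq_apply]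
  rw [h]
  have h1 := (Complex.reCLM.hasFDerivAt (x := z)).mul (Complex.reCLM.hasFDerivAt (x := z))
  have h2 := (Complex.imCLM.hasFDerivAt (x := z)).mul (Complex.imCLM.hasFDerivAt (x := z))
  have := h1.add h2
  refine this.congr_fderiv ?_
  ext1 v
  simp
  ring

noncomputable def Fp (t : ℝ) : ℝ :=
  (1/Real.pi) * Real.log ((t+1)/t) - (2*t+1)/(2*Real.pi*(t*(t+1)))

noncomputable def Fpp (t : ℝ) : ℝ :=
  -(1/(Real.pi*(t*(t+1)))) + (2*t^2+2*t+1)/(2*Real.pi*(t*(t+1))^2)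

lemma hasDerivAt_log_ratio {t : ℝ} (ht : 0 < t) :
    HasDerivAt (fun s => Real.log ((s+1)/s)) (1/(t+1) - 1/t) t := by
  have h1 : HasDerivAt (fun s : ℝ => Real.log (s+1)) (1/(t+1)) t := by
    have := (Real.hasDerivAt_log (by linarith : t+1 ≠ 0)).comp t
      ((hasDerivAt_id t).add_const 1)
    simpa [Function.comp_def] using this
  have h2 : HasDerivAt (fun s : ℝ => Real.log s) (1/t) t := by
    simpa [one_div] using Real.hasDerivAt_log (ne_of_gt ht)
  have h := h1.sub h2
  apply h.congr_of_eventuallyEq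
  filter_upwards [eventually_gt_nhds ht] with s hs
  rw [Real.log_div (by linarith) (ne_of_gt hs)]; rfl

lemma hasDerivAt_G {t : ℝ} (ht : 0 < t) :
    HasDerivAt (fun s => ((2*s+1)/(2*Real.pi)) * Real.log ((s+1)/s) - 1/Real.pi) (Fp t) t := by
  have hlog := hasDerivAt_log_ratio ht
  have hc : HasDerivAt (fun s : ℝ => (2*s+1)/(2*Real.pi)) (2/(2*Real.pi)) t := by
    have : HasDerivAt (fun s : ℝ => 2*s+1) 2 t := by
      simpa using ((hasDerivAt_id t).const_mul 2).add_const 1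
    simpa using this.div_const (2*Real.pi)
  have h := (hc.mul hlog).sub_const (1/Real.pi)
  refine h.congr_deriv ?_
  have hpi := Real.pi_ne_zero
  rw [Fp]
  field_simp
  ring

lemma hasDerivAt_Fp {t : ℝ} (ht : 0 < t) : HasDerivAt Fp (Fpp t) t := by
  have hlog := hasDerivAt_log_ratio ht
  have h1 : HasDerivAt (fun s : ℝ => (1/Real.pi) * Real.log ((s+1)/s))
      ((1/Real.pi) * (1/(t+1) - 1/t)) t := hlog.const_mul _
  have hnum : HasDerivAt (fun s : ℝ => 2*s+1) 2 t := by
    simpa using ((hasDerivAt_id t).const_mul 2).add_const 1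
  have hden : HasDerivAt (fun s : ℝ => 2*Real.pi*(s*(s+1))) (2*Real.pi*(2*t+1)) t := by
    have : HasDerivAt (fun s : ℝ => s*(s+1)) (1*(t+1) + t*1) t :=
      (hasDerivAt_id t).mul ((hasDerivAt_id t).add_const 1)
    have := this.const_mul (2*Real.pi)
    refine this.congr_deriv ?_; ring
  have hden0 : 2*Real.pi*(t*(t+1)) ≠ 0 := by
    have := Real.pi_pos; positivity
  have h2 := hnum.div hden hden0
  have h := h1.sub h2
  apply HasDerivAt.congr_deriv (h.congr_of_eventuallyEq ?_) ?_
  · filter_upwards with s; rw [Fp]; rfl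
  · rw [Fpp]
    have hpi := Real.pi_ne_zero
    have ht1 : t + 1 ≠ 0 := by linarith
    field_simp
    ring

lemma uDisk_eq (z w : ℂ) : uDisk z w =
    Complex.normSq (z-w) / ((1 - Complex.normSq z) * (1 - Complex.normSq w)) := by
  simp [uDisk, Complex.sq_norm]

lemma inner_wD {z w : ℂ} (hz : Complex.normSq z < 1) (hw : Complex.normSq w < 1) (hzw : z ≠ w) :
    wD (fun ω => ((GDisk z ω : ℝ) : ℂ)) w =
      (Fp (uDisk z w) : ℂ) *
        ((((starRingEnd ℂ) w - (starRingEnd ℂ) z) * (1 - (Complex.normSq w : ℂ))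
            + (Complex.normSq (z-w) : ℂ) * (starRingEnd ℂ) w)
          / ((1 - (Complex.normSq z : ℂ)) * (1 - (Complex.normSq w : ℂ))^2)) := by
  have ha : (0:ℝ) < 1 - Complex.normSq z := by linarith
  have hb : (0:ℝ) < 1 - Complex.normSq w := by linarith
  have hN0 : (0:ℝ) < Complex.normSq (z-w) := Complex.normSq_pos.2 (sub_ne_zero.2 hzw)
  have hufun : (fun ω => uDisk z ω) =
      fun ω => Complex.normSq (z-ω) * ((1 - Complex.normSq z) * (1 - Complex.normSq ω))⁻¹ := by
    funext ω; rw [uDisk_eq, div_eq_mul_inv]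
  have hN : HasFDerivAt (fun ω => Complex.normSq (z-ω))
      (((2*(z-w).re) • Complex.reCLM + (2*(z-w).im) • Complex.imCLM).comp
        (-(ContinuousLinearMap.id ℝ ℂ))) w :=
    (hasFDerivAt_normSq' (z-w)).comp w ((hasFDerivAt_id w).const_sub z)
  have hD : HasFDerivAt (fun ω => (1 - Complex.normSq z) * (1 - Complex.normSq ω))
      ((1 - Complex.normSq z) • (-((2*w.re) • Complex.reCLM + (2*w.im) • Complex.imCLM))) w :=
    ((hasFDerivAt_normSq' w).const_sub 1).const_mul _
  have hDne : (1 - Complex.normSq z) * (1 - Complex.normSq w) ≠ 0 := by positivity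
  have hDinv := (hasDerivAt_inv hDne).comp_hasFDerivAt w hD
  have hu' := hN.mul hDinv
  have hu0 : 0 < uDisk z w := by
    rw [uDisk_eq]; positivity
  have hu2 : HasFDerivAt (fun ω => uDisk z ω)
      (Complex.normSq (z - w) • -(((1 - Complex.normSq z) * (1 - Complex.normSq w)) ^ 2)⁻¹ •
          (1 - Complex.normSq z) • -((2 * w.re) • Complex.reCLM + (2 * w.im) • Complex.imCLM) +
        ((1 - Complex.normSq z) * (1 - Complex.normSq w))⁻¹ •
          ((2 * (z - w).re) • Complex.reCLM + (2 * (z - w).im) • Complex.imCLM).comp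
            (-ContinuousLinearMap.id ℝ ℂ)) w := by rw [hufun]; exact hu'
  have hG := (hasDerivAt_G (t := uDisk z w) hu0).comp_hasFDerivAt w hu2
  have hco := (Complex.ofRealCLM.hasFDerivAt).comp w hG
  rw [wD_eq (f := fun ω => ((GDisk z ω : ℝ) : ℂ)) hco]
  rw [uDisk_eq]
  simp only [ContinuousLinearMap.comp_apply, ContinuousLinearMap.smul_apply,
    ContinuousLinearMap.add_apply, ContinuousLinearMap.sub_apply, ContinuousLinearMap.neg_apply,
    ContinuousLinearMap.id_apply, ContinuousLinearMap.coe_smul', Pi.smul_apply,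
    Complex.reCLM_apply, Complex.imCLM_apply, Complex.ofRealCLM_apply, Complex.I_re, Complex.I_im,
    Complex.one_re, Complex.one_im, smul_eq_mul]
  rw [conj_eq w, conj_eq z]
  have hbz : ((1:ℂ) - (Complex.normSq z : ℂ)) ≠ 0 := by
    intro h; apply ha.ne'
    have := congrArg Complex.re h; simpa using this
  have hbw : ((1:ℂ) - (Complex.normSq w : ℂ)) ≠ 0 := by
    intro h; apply hb.ne'
    have := congrArg Complex.re h; simpa using this
  have hre : (z-w).re = z.re - w.re := by simp
  have him : (z-w).im = z.im - w.im := by simp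
  rw [hre, him]
  push_cast
  simp only [Complex.neg_re, Complex.neg_im, Complex.one_re, Complex.one_im, Complex.I_re, Complex.I_im,
    neg_zero, Complex.ofReal_neg, Complex.ofReal_one, Complex.ofReal_zero]
  field_simp
  ring

set_option maxHeartbeats 2000000 in
/-- Explicit evaluation of the mixed derivative of the disk propagator at `z = 0`:
`∂_z∂_w 𝒢(0,w) = -(1/2π)(w̄²/(1-|w|²))((1-3|w|²)/|w|⁴ - (2/(1-|w|²)) log|w|²)`. -/
theorem dz_dw_GDisk_at_zero (w : ℂ) (hw : ‖w‖ < 1) (hw0 : w ≠ 0) :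
    wD (fun z => wD (fun ω => (GDisk z ω : ℂ)) w) 0
      = -(1 / (2 * (Real.pi : ℂ))) * ((starRingEnd ℂ) w ^ 2 / (1 - (‖w‖ : ℂ) ^ 2))
          * ((1 - 3 * (‖w‖ : ℂ) ^ 2) / (‖w‖ : ℂ) ^ 4
              - (2 / (1 - (‖w‖ : ℂ) ^ 2)) * (Real.log (‖w‖ ^ 2) : ℂ)) := by
  have hwn : Complex.normSq w < 1 := by
    rw [← Complex.sq_norm]
    nlinarith [norm_nonneg w]
  have ht0 : 0 < Complex.normSq w := Complex.normSq_pos.2 hw0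
  have hb0 : (0:ℝ) < 1 - Complex.normSq w := by linarith
  set Φ : ℂ → ℂ := fun z =>
    (Fp (uDisk z w) : ℂ) *
      ((((starRingEnd ℂ) w - (starRingEnd ℂ) z) * (1 - (Complex.normSq w : ℂ))
          + (Complex.normSq (z-w) : ℂ) * (starRingEnd ℂ) w)
        * (((1 - (Complex.normSq z : ℂ)) * (1 - (Complex.normSq w : ℂ))^2))⁻¹) with hΦdef
  have hev : (fun z => wD (fun ω => ((GDisk z ω : ℝ) : ℂ)) w) =ᶠ[nhds 0] Φ := by
    have hr : 0 < ‖w‖ := norm_pos_iff.mpr hw0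
    have hball : Metric.ball (0:ℂ) (‖w‖) ∈ nhds (0:ℂ) := Metric.ball_mem_nhds 0 hr
    filter_upwards [hball] with z hz
    have hzw : ‖z‖ < ‖w‖ := by simpa [Complex.dist_eq] using hz
    have hzn : Complex.normSq z < 1 := by
      rw [← Complex.sq_norm]
      nlinarith [norm_nonneg z]
    have hne : z ≠ w := fun h => by simp [h] at hzw
    rw [inner_wD hzn hwn hne, hΦdef, div_eq_mul_inv]
  have h1 : wD (fun z => wD (fun ω => ((GDisk z ω : ℝ) : ℂ)) w) 0 = wD Φ 0 := by
    rw [wD, wD, hev.fderiv_eq]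
  rw [h1]
  -- derivative of z ↦ uDisk z w at 0
  have hufunz : (fun z => uDisk z w) =
      fun z => Complex.normSq (z-w) * ((1 - Complex.normSq z) * (1 - Complex.normSq w))⁻¹ := by
    funext z; rw [uDisk_eq, div_eq_mul_inv]
  have hNz : HasFDerivAt (fun z => Complex.normSq (z-w))
      ((((2*((0:ℂ)-w).re) • Complex.reCLM + (2*((0:ℂ)-w).im) • Complex.imCLM)).comp
        (ContinuousLinearMap.id ℝ ℂ)) 0 :=
    (hasFDerivAt_normSq' ((0:ℂ)-w)).comp 0 ((hasFDerivAt_id (0:ℂ)).sub_const w)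
  have hDz : HasFDerivAt (fun z => (1 - Complex.normSq z) * (1 - Complex.normSq w))
      ((1 - Complex.normSq w) • -((2*(0:ℂ).re) • Complex.reCLM + (2*(0:ℂ).im) • Complex.imCLM)) 0 :=
    ((hasFDerivAt_normSq' 0).const_sub 1).mul_const _
  have hDnez : (1 - Complex.normSq (0:ℂ)) * (1 - Complex.normSq w) ≠ 0 := by
    simp only [Complex.normSq_zero]; positivity
  have hDinvz := (hasDerivAt_inv hDnez).comp_hasFDerivAt 0 hDz
  have huz' := hNz.mul hDinvz
  have huz : HasFDerivAt (fun z => uDisk z w)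
      (Complex.normSq ((0:ℂ) - w) • -(((1 - Complex.normSq (0:ℂ)) * (1 - Complex.normSq w)) ^ 2)⁻¹ •
          (1 - Complex.normSq w) • -((2*(0:ℂ).re) • Complex.reCLM + (2*(0:ℂ).im) • Complex.imCLM) +
        ((1 - Complex.normSq (0:ℂ)) * (1 - Complex.normSq w))⁻¹ •
          (((2*((0:ℂ)-w).re) • Complex.reCLM + (2*((0:ℂ)-w).im) • Complex.imCLM)).comp
            (ContinuousLinearMap.id ℝ ℂ)) 0 := by
    rw [hufunz]; exact huz'
  have hu00 : uDisk 0 w = Complex.normSq w / (1 - Complex.normSq w) := by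
    rw [uDisk_eq]; simp
  have hu0pos : 0 < uDisk 0 w := by rw [hu00]; positivity
  have hψ := (hasDerivAt_Fp hu0pos).comp_hasFDerivAt 0 huz
  have hψc := (Complex.ofRealCLM.hasFDerivAt).comp 0 hψ
  -- derivative of H numerator
  have hconj : HasFDerivAt (fun z : ℂ => (starRingEnd ℂ) z)
      (Complex.conjCLE : ℂ ≃L[ℝ] ℂ).toContinuousLinearMap 0 := Complex.conjCLE.hasFDerivAt
  have hpart1 := ((hasFDerivAt_const ((starRingEnd ℂ) w) (0:ℂ)).sub hconj).mul_const
    ((1 : ℂ) - (Complex.normSq w : ℂ))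
  have hpart2 := ((Complex.ofRealCLM.hasFDerivAt).comp 0 hNz).mul_const ((starRingEnd ℂ) w)
  have hHnum := hpart1.add hpart2
  -- derivative of H denominator inverse
  have hdenc : HasFDerivAt (fun z : ℂ => ((1 : ℂ) - (Complex.normSq z : ℂ)) * (1 - (Complex.normSq w : ℂ))^2)
      (((1 : ℂ) - (Complex.normSq w : ℂ))^2 •
        -(Complex.ofRealCLM.comp ((2*(0:ℂ).re) • Complex.reCLM + (2*(0:ℂ).im) • Complex.imCLM))) 0 :=
    (((Complex.ofRealCLM.hasFDerivAt).comp 0 (hasFDerivAt_normSq' 0)).const_sub 1).mul_const _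
  have hbc : ((1:ℂ) - (Complex.normSq w : ℂ)) ≠ 0 := by
    intro h
    apply ne_of_gt hb0
    have := congrArg Complex.re h
    simpa using this
  have htc : ((Complex.normSq w : ℝ) : ℂ) ≠ 0 := by
    exact_mod_cast ne_of_gt ht0
  have hdne : ((1 : ℂ) - (Complex.normSq (0:ℂ) : ℂ)) * (1 - (Complex.normSq w : ℂ))^2 ≠ 0 := by
    simp only [Complex.normSq_zero, Complex.ofReal_zero, sub_zero, one_mul]
    exact pow_ne_zero 2 hbc
  have hHdinv := (hasDerivAt_inv hdne).comp_hasFDerivAt 0 hdenc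
  have hH := hHnum.mul hHdinv
  have hΦ' := hψc.mul hH
  rw [wD_eq (f := Φ) (z := 0) hΦ']
  simp only [ContinuousLinearMap.comp_apply, ContinuousLinearMap.smul_apply,
    ContinuousLinearMap.add_apply, ContinuousLinearMap.sub_apply, ContinuousLinearMap.neg_apply,
    ContinuousLinearMap.id_apply, ContinuousLinearMap.coe_smul', Pi.smul_apply,
    Complex.reCLM_apply, Complex.imCLM_apply, Complex.ofRealCLM_apply,
    ContinuousLinearEquiv.coe_coe, Complex.conjCLE_apply, Complex.I_re, Complex.I_im,
    Complex.one_re, Complex.one_im, smul_eq_mul, Complex.zero_re, Complex.zero_im,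
    Complex.normSq_zero, zero_sub, Complex.neg_re, Complex.neg_im,
    Complex.ofReal_zero, sub_zero, one_mul, mul_zero, zero_mul, mul_one, add_zero, zero_add,
    ContinuousLinearMap.zero_apply, Complex.real_smul, map_one, Complex.ofReal_neg,
    Complex.ofReal_mul, Complex.ofReal_one, Complex.conj_I, map_zero, neg_zero]
  simp only [Function.comp_apply, Function.comp, Complex.normSq_zero, Complex.ofReal_zero,
    sub_zero, one_mul, zero_sub, Complex.normSq_neg, Complex.ofRealCLM_apply, Pi.add_apply, Pi.mul_apply,
    Pi.sub_apply]
  have hlog : Real.log ((uDisk 0 w + 1)/(uDisk 0 w)) = -Real.log (Complex.normSq w) := by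
    rw [hu00, show (Complex.normSq w/(1-Complex.normSq w) + 1)/(Complex.normSq w/(1-Complex.normSq w))
        = (Complex.normSq w)⁻¹ from by field_simp; ring]
    exact Real.log_inv _
  have habs2 : ((‖w‖ : ℝ) : ℂ)^2 = ((Complex.normSq w : ℝ) : ℂ) := by
    rw [← Complex.ofReal_pow, Complex.sq_norm]
  have habs4 : ((‖w‖ : ℝ) : ℂ)^4 = ((Complex.normSq w : ℝ) : ℂ)^2 := by
    rw [show ((‖w‖ : ℝ) : ℂ)^4 = (((‖w‖ : ℝ) : ℂ)^2)^2 from by ring, habs2]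
  have hlog2 : Real.log (‖w‖ ^ 2) = Real.log (Complex.normSq w) := by
    rw [Complex.sq_norm]
  have hFp : Fp (uDisk 0 w) = -(1/Real.pi) * Real.log (Complex.normSq w)
      - (1 + Complex.normSq w)*(1 - Complex.normSq w)/(2*Real.pi*Complex.normSq w) := by
    rw [Fp, hlog, hu00]
    have hpi := Real.pi_ne_zero
    have ht := ne_of_gt ht0
    have hb := ne_of_gt hb0
    field_simp
    ring
  have hFpp : Fpp (uDisk 0 w) = (1 - Complex.normSq w)^4/(2*Real.pi*(Complex.normSq w)^2) := by
    rw [Fpp, hu00]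
    have hpi := Real.pi_ne_zero
    have ht := ne_of_gt ht0
    have hb := ne_of_gt hb0
    field_simp
    ring
  rw [habs2, habs4, hlog2, hFp, hFpp]
  simp only [conj_eq w]
  have hpic : ((Real.pi : ℝ) : ℂ) ≠ 0 := Complex.ofReal_ne_zero.2 Real.pi_ne_zero
  have hI2 : Complex.I ^ 2 = -1 := Complex.I_sq
  have hI3 : Complex.I ^ 3 = -Complex.I := by
    rw [pow_succ, hI2]; ring
  have hI4 : Complex.I ^ 4 = 1 := by
    rw [pow_succ, hI3]; simp [Complex.I_mul_I]
  push_cast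
  have he : (Real.pi:ℂ) ^ 2 * (Complex.normSq w : ℂ) * 2 - (Real.pi:ℂ) ^ 2 * (Complex.normSq w : ℂ) ^ 2 * 4
      + (Real.pi:ℂ) ^ 2 * (Complex.normSq w : ℂ) ^ 3 * 2
      = 2 * (Real.pi:ℂ) ^ 2 * (Complex.normSq w : ℂ) * ((1:ℂ) - (Complex.normSq w : ℂ)) ^ 2 := by
    ring
  have hbig : (Real.pi:ℂ) ^ 2 * (Complex.normSq w : ℂ) * 2 - (Real.pi:ℂ) ^ 2 * (Complex.normSq w : ℂ) ^ 2 * 4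
      + (Real.pi:ℂ) ^ 2 * (Complex.normSq w : ℂ) ^ 3 * 2 ≠ 0 := by
    have he : (Real.pi:ℂ) ^ 2 * (Complex.normSq w : ℂ) * 2 - (Real.pi:ℂ) ^ 2 * (Complex.normSq w : ℂ) ^ 2 * 4
        + (Real.pi:ℂ) ^ 2 * (Complex.normSq w : ℂ) ^ 3 * 2
        = 2 * (Real.pi:ℂ) ^ 2 * (Complex.normSq w : ℂ) * ((1:ℂ) - (Complex.normSq w : ℂ)) ^ 2 := by
      ring
    rw [he]
    exact mul_ne_zero (mul_ne_zero (mul_ne_zero two_ne_zero (pow_ne_zero 2 hpic)) htc)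
      (pow_ne_zero 2 hbc)
  field_simp [htc, hbc, hpic]
  have hD1 : (Real.pi:ℂ) * (2 * (Real.pi:ℂ) * (Complex.normSq w : ℂ)) * ((1:ℂ) - (Complex.normSq w : ℂ))^2 ≠ 0 :=
    mul_ne_zero (mul_ne_zero hpic (mul_ne_zero (mul_ne_zero two_ne_zero hpic) htc)) (pow_ne_zero 2 hbc)
  have hD2 : ((1:ℂ) - (Complex.normSq w : ℂ))^2 * (2 * (Real.pi:ℂ) * (Complex.normSq w : ℂ)^2 * ((1:ℂ) - (Complex.normSq w : ℂ))) ≠ 0 :=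
    mul_ne_zero (pow_ne_zero 2 hbc)
      (mul_ne_zero (mul_ne_zero (mul_ne_zero two_ne_zero hpic) (pow_ne_zero 2 htc)) hbc)
  simp only [map_zero, sub_zero]
  ring_nf
  simp only [hI2, hI3, hI4]
  ring
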